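/- Let Ω be an open convex cone in ℝⁿ whose dual cone Ω* has nonempty interior. For each x ∈ Ω the function y ↦ e^{−⟨x,y⟩} is integrable over Ω*, so the characteristic function φ(x) = ∫_{Ω*} e^{−⟨x,y⟩} dy is well defined and finite, and moreover φ(x) > 0. -/

import Mathlib

open MeasureTheory Real

/-- Elementary bound: `exp (-(c*t)) ≤ K * (1+t)^(-m)` for `t ≥ 0`, `c > 0`. -/
lemma aux_exp_le (m : ℕ) {c t : ℝ} (hc : 0 < c) (ht : 0 ≤ t) :
    Real.exp (-(c * t)) ≤ (m.factorial * Real.exp c / c ^ m) * (1 + t) ^ (-(m : ℝ)) := by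
  have hB : (0:ℝ) < (1 + t) ^ m := pow_pos (by linarith) m
  have h1 : (c * (1 + t)) ^ m / m.factorial ≤ Real.exp (c * (1 + t)) :=
    Real.pow_div_factorial_le_exp _ (by positivity) m
  have hfac : (0:ℝ) < m.factorial := by exact_mod_cast m.factorial_pos
  rw [div_le_iff₀ hfac, mul_pow] at h1
  have heq : c * (1 + t) = c + c * t := by ring
  rw [heq, Real.exp_add] at h1
  have key : Real.exp (-(c * t)) * (1 + t) ^ m ≤ m.factorial * Real.exp c / c ^ m := by
    rw [Real.exp_neg, inv_mul_le_iff₀ (Real.exp_pos _), mul_div_assoc',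
      le_div_iff₀ (pow_pos hc m)]
    nlinarith [h1]
  rw [Real.rpow_neg (by linarith : (0:ℝ) ≤ 1 + t), Real.rpow_natCast,
    ← div_eq_mul_inv, le_div_iff₀ hB]
  exact key

/-- for an open convex cone Ω whose open dual cone Ω* has nonempty
interior, and any x ∈ Ω, the function y ↦ e^{−⟨x,y⟩} is integrable on Ω*, and
the characteristic function φ(x) = ∫_{Ω*} e^{−⟨x,y⟩} dy is finite and
strictly positive. -/
theorem characteristic_function_integrable_pos
    (n : ℕ) (Ω : Set (EuclideanSpace ℝ (Fin n)))
    (hopen : IsOpen Ω) (hconv : Convex ℝ Ω)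
    (hcone : ∀ c : ℝ, 0 < c → ∀ x ∈ Ω, c • x ∈ Ω)
    (dual : Set (EuclideanSpace ℝ (Fin n)))
    (hdual : dual = {y | ∀ x ∈ closure Ω, x ≠ 0 → 0 < (inner ℝ x y : ℝ)})
    (hdual_int : (interior dual).Nonempty) :
    ∀ x ∈ Ω,
      IntegrableOn (fun y => Real.exp (-(inner ℝ x y : ℝ))) dual ∧
        0 < ∫ y in dual, Real.exp (-(inner ℝ x y : ℝ)) := by
  intro x hx
  haveI : (volume : Measure (EuclideanSpace ℝ (Fin n))).IsAddHaarMeasure := by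
    rw [← (EuclideanSpace.basisFun (Fin n) ℝ).addHaar_eq_volume]; infer_instance
  -- dual is convex, hence null measurable
  have hconv_dual : Convex ℝ dual := by
    rw [hdual]
    intro y₁ h₁ y₂ h₂ a b ha hb hab
    intro z hz hz0
    have p₁ := h₁ z hz hz0
    have p₂ := h₂ z hz hz0
    have : (inner ℝ z (a • y₁ + b • y₂) : ℝ) = a * inner ℝ z y₁ + b * inner ℝ z y₂ := by
      rw [inner_add_right, real_inner_smul_right, real_inner_smul_right]
    rw [Set.mem_setOf_eq] at *
    rcases ha.lt_or_eq with ha' | ha'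
    · have hb2 : 0 ≤ b * (inner ℝ z y₂ : ℝ) := mul_nonneg hb p₂.le
      have ha2 : 0 < a * (inner ℝ z y₁ : ℝ) := mul_pos ha' p₁
      rw [this]; linarith
    · have hb1 : b = 1 := by linarith
      rw [this, ← ha', hb1]; simpa using p₂
  have hnm : NullMeasurableSet dual (volume : Measure (EuclideanSpace ℝ (Fin n))) :=
    hconv_dual.nullMeasurableSet volume
  -- find a ball around x inside Ω
  obtain ⟨r, hr, hball⟩ := Metric.isOpen_iff.mp hopen x hx
  set c : ℝ := r / 2 with hc_def
  have hc : 0 < c := by positivity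
  -- key estimate: ⟨x, y⟩ ≥ c‖y‖ on dual
  have kb : ∀ y ∈ dual, c * ‖y‖ ≤ (inner ℝ x y : ℝ) := by
    intro y hy
    rcases eq_or_ne y 0 with rfl | hy0
    · simp
    · have hny : (0:ℝ) < ‖y‖ := norm_pos_iff.mpr hy0
      set x' : EuclideanSpace ℝ (Fin n) := x - (c * ‖y‖⁻¹) • y with hx'_def
      have hx'Ω : x' ∈ Ω := by
        apply hball
        have : dist x' x = ‖(c * ‖y‖⁻¹) • y‖ := by
          rw [dist_eq_norm, hx'_def]
          simp [sub_sub_cancel_left, norm_neg]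
        rw [Metric.mem_ball, this, norm_smul, Real.norm_eq_abs,
          abs_of_pos (by positivity : (0:ℝ) < c * ‖y‖⁻¹)]
        rw [mul_assoc, inv_mul_cancel₀ (ne_of_gt hny), mul_one]
        rw [hc_def]; linarith
      have hinner : (inner ℝ x' y : ℝ) = inner ℝ x y - c * ‖y‖ := by
        rw [hx'_def, inner_sub_left, real_inner_smul_left,
          real_inner_self_eq_norm_sq]
        field_simp
      have hnn : 0 ≤ (inner ℝ x' y : ℝ) := by
        rcases eq_or_ne x' 0 with h0 | h0
        · rw [h0]; simp
        · rw [hdual] at hy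
          exact (hy x' (subset_closure hx'Ω) h0).le
      linarith [hinner ▸ hnn]
  -- the dominating integrable function
  set m : ℕ := n + 1 with hm_def
  have hdim : ((Module.finrank ℝ (EuclideanSpace ℝ (Fin n))) : ℝ) < (m : ℝ) := by
    rw [finrank_euclideanSpace_fin]
    exact_mod_cast Nat.lt_succ_self n
  have hg : Integrable (fun y : EuclideanSpace ℝ (Fin n) =>
      (m.factorial * Real.exp c / c ^ m) * (1 + ‖y‖) ^ (-(m : ℝ))) volume :=
    (integrable_one_add_norm hdim).const_mul _
  have hcont : Continuous (fun y : EuclideanSpace ℝ (Fin n) =>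
      Real.exp (-(inner ℝ x y : ℝ))) :=
    Real.continuous_exp.comp ((continuous_const.inner continuous_id).neg)
  have hint : IntegrableOn (fun y => Real.exp (-(inner ℝ x y : ℝ))) dual volume := by
    apply Integrable.mono' (hg.restrict (s := dual)) hcont.aestronglyMeasurable
    rw [ae_restrict_iff'₀ hnm]
    refine ae_of_all _ (fun y hy => ?_)
    have h1 : ‖Real.exp (-(inner ℝ x y : ℝ))‖ = Real.exp (-(inner ℝ x y : ℝ)) := by
      rw [Real.norm_eq_abs, abs_of_pos (Real.exp_pos _)]
    rw [h1]
    calc Real.exp (-(inner ℝ x y : ℝ)) ≤ Real.exp (-(c * ‖y‖)) := by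
          apply Real.exp_le_exp.mpr
          have := kb y hy
          linarith
      _ ≤ (m.factorial * Real.exp c / c ^ m) * (1 + ‖y‖) ^ (-(m : ℝ)) :=
          aux_exp_le m hc (norm_nonneg y)
  refine ⟨hint, ?_⟩
  have hsupp : Function.support (fun y : EuclideanSpace ℝ (Fin n) =>
      Real.exp (-(inner ℝ x y : ℝ))) = Set.univ := by
    ext y; simp [Real.exp_ne_zero]
  rw [setIntegral_pos_iff_support_of_nonneg_ae
    (ae_of_all _ (fun y => (Real.exp_pos _).le)) hint, hsupp, Set.univ_inter]
  calc (0 : ENNReal) < volume (interior dual) :=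
        isOpen_interior.measure_pos volume hdual_int
    _ ≤ volume dual := measure_mono interior_subset
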